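/- Let k ∈ ℕ and for each 0 ≤ i ≤ k let p_i, q_i > i + 1; set p := (p_0,…,p_k), q := (q_0,…,q_k). Then T_0 : A_{p,q;k} → A_{p,q;k} is a bounded linear operator. If moreover p_i ≥ q_i > ζ^{−1}(2) + i for all 0 ≤ i ≤ k, where ζ^{−1} is the inverse of the decreasing bijection ζ : (1,∞) → (1,∞), then T_0 : A_{p,q;k} → A_{p,q;k} is an isomorphism of Banach spaces (a bounded linear bijection with bounded inverse). -/

import Mathlib

open Filter Set

/-- `f` belongs to `A_{p,q}`: viewed as a function on `(0,∞)` (values elsewhere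
are irrelevant), it is continuous, with `limsup_{t→0⁺} t^p |f(t)| < ∞` and
`limsup_{t→∞} t^q |f(t)| < ∞`. -/
def MemApq (p q : ℝ) (f : ℝ → ℝ) : Prop :=
  ContinuousOn f (Set.Ioi 0) ∧
  (∃ M : ℝ, ∀ᶠ t in nhdsWithin 0 (Set.Ioi 0), t ^ p * |f t| ≤ M) ∧
  (∃ M : ℝ, ∀ᶠ t in atTop, t ^ q * |f t| ≤ M)

/-- `‖f‖_{p,q} = max{ sup_{t∈(0,1)} t^p |f(t)|, sup_{t∈[1,∞)} t^q |f(t)| }`. -/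
noncomputable def normApq (p q : ℝ) (f : ℝ → ℝ) : ℝ :=
  max (sSup ((fun t : ℝ => t ^ p * |f t|) '' Set.Ioo 0 1))
      (sSup ((fun t : ℝ => t ^ q * |f t|) '' Set.Ici 1))


/-- The operator `T_k`: `T_k f (t) = ∑_{j=1}^∞ j^k f(jt)`. -/
noncomputable def Tk (k : ℕ) (f : ℝ → ℝ) : ℝ → ℝ :=
  fun t => ∑' j : ℕ, ((j : ℝ) + 1) ^ k * f (((j : ℝ) + 1) * t)

/-- Riemann zeta function for real `s > 1`: `ζ(s) = ∑_{j=1}^∞ j^{−s}`. -/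
noncomputable def zetaR (s : ℝ) : ℝ := ∑' j : ℕ, ((j : ℝ) + 1) ^ (-s)

/-- `f ∈ A_{p,q;k}`: `f` is `C^k` on `(0,∞)` and each derivative
`f^{(i)}` belongs to `A_{p_i,q_i}`. -/
def MemApqK (k : ℕ) (p q : Fin (k + 1) → ℝ) (f : ℝ → ℝ) : Prop :=
  ContDiffOn ℝ k f (Set.Ioi 0) ∧
  ∀ i : Fin (k + 1), MemApq (p i) (q i) (iteratedDerivWithin i f (Set.Ioi 0))

/-- `‖f‖_{p,q;k} = ∑_{i=0}^k ‖f^{(i)}‖_{p_i,q_i}`. -/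
noncomputable def normApqK (k : ℕ) (p q : Fin (k + 1) → ℝ) (f : ℝ → ℝ) : ℝ :=
  ∑ i : Fin (k + 1), normApq (p i) (q i) (iteratedDerivWithin i f (Set.Ioi 0))

/-- `T_0` is a bounded linear operator on `A_{p,q;k}` when
`p_i, q_i > i+1`, and it is an isomorphism of Banach spaces when moreover
`p_i ≥ q_i > ζ^{−1}(2) + i` for all `i`. -/
/- ### auxiliary lemmas -/

lemma summable_pow_aux {e : ℝ} (he : e < -1) : Summable (fun n : ℕ => ((n:ℝ)+1) ^ e) := by
  have h : Summable (fun n : ℕ => ((n:ℝ)) ^ e) := Real.summable_nat_rpow.mpr he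
  have h2 := (summable_nat_add_iff (f := fun n : ℕ => ((n:ℝ)) ^ e) 1).mpr h
  refine h2.congr fun n => ?_
  push_cast
  ring_nf

noncomputable def Zc (e : ℝ) : ℝ := ∑' n : ℕ, ((n:ℝ)+1) ^ e

lemma Zc_nonneg (e : ℝ) : 0 ≤ Zc e :=
  tsum_nonneg fun n => Real.rpow_nonneg (by positivity) e

lemma rpow_neg_anti {a b e : ℝ} (ha : 0 < a) (hab : a ≤ b) (he : 0 ≤ e) :
    b ^ (-e) ≤ a ^ (-e) := by
  rw [Real.rpow_neg (le_trans ha.le hab), Real.rpow_neg ha.le]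
  exact inv_anti₀ (Real.rpow_pos_of_pos ha e) (Real.rpow_le_rpow ha.le hab he)

lemma continuousOn_weight (p : ℝ) (f : ℝ → ℝ) (hf : ContinuousOn f (Ioi 0)) :
    ContinuousOn (fun t : ℝ => t ^ p * |f t|) (Ioi 0) := by
  apply ContinuousOn.mul
  · intro x hx
    exact (Real.continuousAt_rpow_const x p (Or.inl (ne_of_gt hx))).continuousWithinAt
  · exact hf.abs

lemma MemApq.bddAbove_lo {p q : ℝ} {f : ℝ → ℝ} (h : MemApq p q f) :
    BddAbove ((fun t : ℝ => t ^ p * |f t|) '' Ioo 0 1) := by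
  obtain ⟨M, hM⟩ := h.2.1
  rw [eventually_nhdsWithin_iff] at hM
  obtain ⟨ε, hε, hball⟩ := Metric.eventually_nhds_iff.mp hM
  set δ := min ε 1 with hδ
  have hδ0 : 0 < δ := lt_min hε one_pos
  obtain ⟨B, hB⟩ := (isCompact_Icc (a := δ) (b := 1)).exists_bound_of_continuousOn
    ((continuousOn_weight p f h.1).mono (fun x hx => lt_of_lt_of_le hδ0 hx.1))
  refine ⟨max M B, ?_⟩
  rintro _ ⟨t, ht, rfl⟩
  rcases lt_or_ge t δ with htδ | htδ
  · refine le_trans (hball ?_ ht.1) (le_max_left _ _)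
    rw [Real.dist_eq, sub_zero, abs_of_pos ht.1]
    exact lt_of_lt_of_le htδ (min_le_left _ _)
  · refine le_trans (le_trans (le_abs_self _) (hB t ⟨htδ, ht.2.le⟩)) (le_max_right _ _)

lemma MemApq.bddAbove_hi {p q : ℝ} {f : ℝ → ℝ} (h : MemApq p q f) :
    BddAbove ((fun t : ℝ => t ^ q * |f t|) '' Ici 1) := by
  obtain ⟨M, hM⟩ := h.2.2
  rw [eventually_atTop] at hM
  obtain ⟨B0, hB0⟩ := hM
  obtain ⟨B, hB⟩ := (isCompact_Icc (a := 1) (b := max B0 1)).exists_bound_of_continuousOn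
    ((continuousOn_weight q f h.1).mono (fun x hx => lt_of_lt_of_le one_pos hx.1))
  refine ⟨max M B, ?_⟩
  rintro _ ⟨t, ht, rfl⟩
  rcases le_or_gt t (max B0 1) with htB | htB
  · exact le_trans (le_trans (le_abs_self _) (hB t ⟨ht, htB⟩)) (le_max_right _ _)
  · exact le_trans (hB0 t (le_of_lt (lt_of_le_of_lt (le_max_left _ _) htB))) (le_max_left _ _)

lemma MemApq.le_norm_lo {p q : ℝ} {f : ℝ → ℝ} (h : MemApq p q f) {u : ℝ}
    (hu : u ∈ Ioo (0:ℝ) 1) : u ^ p * |f u| ≤ normApq p q f :=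
  le_trans (le_csSup h.bddAbove_lo ⟨u, hu, rfl⟩) (le_max_left _ _)

lemma MemApq.le_norm_hi {p q : ℝ} {f : ℝ → ℝ} (h : MemApq p q f) {u : ℝ}
    (hu : 1 ≤ u) : u ^ q * |f u| ≤ normApq p q f :=
  le_trans (le_csSup h.bddAbove_hi ⟨u, hu, rfl⟩) (le_max_right _ _)

lemma MemApq.norm_nonneg' {p q : ℝ} {f : ℝ → ℝ} (h : MemApq p q f) :
    0 ≤ normApq p q f :=
  le_trans (by positivity) (h.le_norm_hi (le_refl 1))

lemma MemApq.bound_mul {p q : ℝ} {G : ℝ → ℝ} (h : MemApq p q G) {t u : ℝ}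
    (ht : 0 < t) (hu : 1 ≤ u) :
    |G (u * t)| ≤ normApq p q G * max (t ^ (-p)) (t ^ (-q)) * u ^ (-(min p q)) := by
  have hu0 : (0:ℝ) < u := lt_of_lt_of_le one_pos hu
  have hv : 0 < u * t := mul_pos hu0 ht
  have hC0 : 0 ≤ normApq p q G := h.norm_nonneg'
  rcases lt_or_ge (u*t) 1 with hv1 | hv1
  · have h1 : (u*t) ^ p * |G (u*t)| ≤ normApq p q G := h.le_norm_lo ⟨hv, hv1⟩
    have hApos : 0 < (u*t) ^ p := Real.rpow_pos_of_pos hv p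
    have h2 : |G (u*t)| ≤ normApq p q G * (u*t) ^ (-p) := by
      rw [Real.rpow_neg hv.le, mul_comm (normApq p q G), ← div_eq_inv_mul, le_div_iff₀ hApos,
        mul_comm]
      exact h1
    calc |G (u*t)| ≤ normApq p q G * (u*t) ^ (-p) := h2
      _ = normApq p q G * (t ^ (-p) * u ^ (-p)) := by
          rw [Real.mul_rpow hu0.le ht.le]; ring
      _ ≤ normApq p q G * (max (t ^ (-p)) (t ^ (-q)) * u ^ (-(min p q))) := by
          apply mul_le_mul_of_nonneg_left _ hC0
          apply mul_le_mul (le_max_left _ _)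
            (Real.rpow_le_rpow_of_exponent_le hu (by simp [min_le_left]))
            (Real.rpow_nonneg hu0.le _) (le_max_of_le_left (Real.rpow_nonneg ht.le _))
      _ = normApq p q G * max (t ^ (-p)) (t ^ (-q)) * u ^ (-(min p q)) := by ring
  · have h1 : (u*t) ^ q * |G (u*t)| ≤ normApq p q G := h.le_norm_hi hv1
    have hApos : 0 < (u*t) ^ q := Real.rpow_pos_of_pos hv q
    have h2 : |G (u*t)| ≤ normApq p q G * (u*t) ^ (-q) := by
      rw [Real.rpow_neg hv.le, mul_comm (normApq p q G), ← div_eq_inv_mul, le_div_iff₀ hApos,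
        mul_comm]
      exact h1
    calc |G (u*t)| ≤ normApq p q G * (u*t) ^ (-q) := h2
      _ = normApq p q G * (t ^ (-q) * u ^ (-q)) := by
          rw [Real.mul_rpow hu0.le ht.le]; ring
      _ ≤ normApq p q G * (max (t ^ (-p)) (t ^ (-q)) * u ^ (-(min p q))) := by
          apply mul_le_mul_of_nonneg_left _ hC0
          apply mul_le_mul (le_max_right _ _)
            (Real.rpow_le_rpow_of_exponent_le hu (by simp [min_le_right]))
            (Real.rpow_nonneg hu0.le _) (le_max_of_le_left (Real.rpow_nonneg ht.le _))
      _ = normApq p q G * max (t ^ (-p)) (t ^ (-q)) * u ^ (-(min p q)) := by ring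

lemma weight_shift {t u w : ℝ} (ht : 0 < t) (hu0 : 0 < u) (X : ℝ) :
    t ^ w * X = u ^ (-w) * ((u*t) ^ w * X) := by
  rw [Real.mul_rpow hu0.le ht.le, Real.rpow_neg hu0.le]
  field_simp

lemma MemApq.bound_lo {p q : ℝ} {G : ℝ → ℝ} (h : MemApq p q G) {t u : ℝ}
    (ht : 0 < t) (ht1 : t ≤ 1) (hu : 1 ≤ u) :
    t ^ p * |G (u * t)| ≤ normApq p q G * u ^ (-(min p q)) := by
  have hu0 : (0:ℝ) < u := lt_of_lt_of_le one_pos hu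
  have hv : 0 < u * t := mul_pos hu0 ht
  have hC0 : 0 ≤ normApq p q G := h.norm_nonneg'
  have humin : u ^ (-p) ≤ u ^ (-(min p q)) :=
    Real.rpow_le_rpow_of_exponent_le hu (by simp [min_le_left])
  rcases lt_or_ge (u*t) 1 with hv1 | hv1
  · have h1 : (u*t) ^ p * |G (u*t)| ≤ normApq p q G := h.le_norm_lo ⟨hv, hv1⟩
    calc t ^ p * |G (u*t)| = u ^ (-p) * ((u*t) ^ p * |G (u*t)|) := weight_shift ht hu0 _
      _ ≤ u ^ (-p) * normApq p q G :=
          mul_le_mul_of_nonneg_left h1 (Real.rpow_nonneg hu0.le _)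
      _ ≤ u ^ (-(min p q)) * normApq p q G := mul_le_mul_of_nonneg_right humin hC0
      _ = normApq p q G * u ^ (-(min p q)) := by ring
  · have h1 : (u*t) ^ q * |G (u*t)| ≤ normApq p q G := h.le_norm_hi hv1
    have h2 : |G (u*t)| ≤ normApq p q G * (u*t) ^ (-q) := by
      have hApos : 0 < (u*t) ^ q := Real.rpow_pos_of_pos hv q
      rw [Real.rpow_neg hv.le, mul_comm (normApq p q G), ← div_eq_inv_mul, le_div_iff₀ hApos,
        mul_comm]
      exact h1
    have h3 : (u*t) ^ (-q) ≤ (u*t) ^ (-(min p q)) :=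
      Real.rpow_le_rpow_of_exponent_le hv1 (by simp [min_le_right])
    have h4 : t ^ p * ((u*t) ^ (-(min p q))) = t ^ (p - min p q) * u ^ (-(min p q)) := by
      rw [Real.mul_rpow hu0.le ht.le, show p - min p q = p + -(min p q) by ring,
        Real.rpow_add ht]
      ring
    have h5 : t ^ (p - min p q) ≤ 1 :=
      Real.rpow_le_one ht.le ht1 (by simp [sub_nonneg, min_le_left])
    have htp : (0:ℝ) ≤ t ^ p := Real.rpow_nonneg ht.le _
    calc t ^ p * |G (u*t)| ≤ t ^ p * (normApq p q G * (u*t) ^ (-q)) :=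
          mul_le_mul_of_nonneg_left h2 htp
      _ ≤ t ^ p * (normApq p q G * (u*t) ^ (-(min p q))) := by
          apply mul_le_mul_of_nonneg_left (mul_le_mul_of_nonneg_left h3 hC0) htp
      _ = normApq p q G * (t ^ (p - min p q) * u ^ (-(min p q))) := by
          rw [show t ^ p * (normApq p q G * (u*t) ^ (-(min p q)))
              = normApq p q G * (t ^ p * ((u*t) ^ (-(min p q)))) by ring, h4]
      _ ≤ normApq p q G * (1 * u ^ (-(min p q))) := by
          apply mul_le_mul_of_nonneg_left _ hC0
          exact mul_le_mul_of_nonneg_right h5 (Real.rpow_nonneg hu0.le _)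
      _ = normApq p q G * u ^ (-(min p q)) := by ring

lemma MemApq.bound_hi {p q : ℝ} {G : ℝ → ℝ} (h : MemApq p q G) {t u : ℝ}
    (ht : 1 ≤ t) (hu : 1 ≤ u) :
    t ^ q * |G (u * t)| ≤ normApq p q G * u ^ (-(min p q)) := by
  have hu0 : (0:ℝ) < u := lt_of_lt_of_le one_pos hu
  have ht0 : (0:ℝ) < t := lt_of_lt_of_le one_pos ht
  have hv1 : 1 ≤ u * t := by nlinarith
  have hC0 : 0 ≤ normApq p q G := h.norm_nonneg'
  have h1 : (u*t) ^ q * |G (u*t)| ≤ normApq p q G := h.le_norm_hi hv1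
  have humin : u ^ (-q) ≤ u ^ (-(min p q)) :=
    Real.rpow_le_rpow_of_exponent_le hu (by simp [min_le_right])
  calc t ^ q * |G (u*t)| = u ^ (-q) * ((u*t) ^ q * |G (u*t)|) := weight_shift ht0 hu0 _
    _ ≤ u ^ (-q) * normApq p q G :=
        mul_le_mul_of_nonneg_left h1 (Real.rpow_nonneg hu0.le _)
    _ ≤ u ^ (-(min p q)) * normApq p q G := mul_le_mul_of_nonneg_right humin hC0
    _ = normApq p q G * u ^ (-(min p q)) := by ring

noncomputable def SOp (a : ℕ → ℝ) (G : ℝ → ℝ) : ℝ → ℝ :=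
  fun t => ∑' n : ℕ, a n * G (((n:ℝ)+1) * t)

lemma nat_one_le (n : ℕ) : (1:ℝ) ≤ (n:ℝ) + 1 := by
  have : (0:ℝ) ≤ (n:ℝ) := Nat.cast_nonneg n
  linarith

lemma nat_pos (n : ℕ) : (0:ℝ) < (n:ℝ) + 1 := lt_of_lt_of_le one_pos (nat_one_le n)

section TermBounds

variable {p q : ℝ} {G : ℝ → ℝ} {a : ℕ → ℝ} {K c : ℝ}

lemma term_bound_gen (hG : MemApq p q G) (hK : 0 ≤ K)
    (ha : ∀ n, |a n| ≤ K * ((n:ℝ)+1) ^ c) {t : ℝ} (ht : 0 < t) (n : ℕ) :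
    |a n * G (((n:ℝ)+1) * t)| ≤
      (K * normApq p q G * max (t ^ (-p)) (t ^ (-q))) * ((n:ℝ)+1) ^ (c - min p q) := by
  have h1 := hG.bound_mul ht (nat_one_le n)
  calc |a n * G (((n:ℝ)+1)*t)| = |a n| * |G (((n:ℝ)+1)*t)| := abs_mul _ _
    _ ≤ (K * ((n:ℝ)+1) ^ c) *
        (normApq p q G * max (t ^ (-p)) (t ^ (-q)) * ((n:ℝ)+1) ^ (-(min p q))) := by
        apply mul_le_mul (ha n) h1 (abs_nonneg _)
        positivity
    _ = (K * normApq p q G * max (t ^ (-p)) (t ^ (-q))) *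
        (((n:ℝ)+1) ^ c * ((n:ℝ)+1) ^ (-(min p q))) := by ring
    _ = (K * normApq p q G * max (t ^ (-p)) (t ^ (-q))) * ((n:ℝ)+1) ^ (c - min p q) := by
        rw [← Real.rpow_add (nat_pos n)]; ring_nf

lemma term_bound_lo (hG : MemApq p q G) (hK : 0 ≤ K)
    (ha : ∀ n, |a n| ≤ K * ((n:ℝ)+1) ^ c) {t : ℝ} (ht : t ∈ Ioc (0:ℝ) 1) (n : ℕ) :
    t ^ p * |a n * G (((n:ℝ)+1) * t)| ≤
      (K * normApq p q G) * ((n:ℝ)+1) ^ (c - min p q) := by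
  have h1 := hG.bound_lo ht.1 ht.2 (nat_one_le n)
  have htp : (0:ℝ) ≤ t ^ p := Real.rpow_nonneg ht.1.le _
  calc t ^ p * |a n * G (((n:ℝ)+1)*t)| = |a n| * (t ^ p * |G (((n:ℝ)+1)*t)|) := by
        rw [abs_mul]; ring
    _ ≤ (K * ((n:ℝ)+1) ^ c) * (normApq p q G * ((n:ℝ)+1) ^ (-(min p q))) := by
        apply mul_le_mul (ha n) h1 (by positivity)
        positivity
    _ = (K * normApq p q G) * (((n:ℝ)+1) ^ c * ((n:ℝ)+1) ^ (-(min p q))) := by ring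
    _ = (K * normApq p q G) * ((n:ℝ)+1) ^ (c - min p q) := by
        rw [← Real.rpow_add (nat_pos n)]; ring_nf

lemma term_bound_hi (hG : MemApq p q G) (hK : 0 ≤ K)
    (ha : ∀ n, |a n| ≤ K * ((n:ℝ)+1) ^ c) {t : ℝ} (ht : 1 ≤ t) (n : ℕ) :
    t ^ q * |a n * G (((n:ℝ)+1) * t)| ≤
      (K * normApq p q G) * ((n:ℝ)+1) ^ (c - min p q) := by
  have h1 := hG.bound_hi ht (nat_one_le n)
  have htq : (0:ℝ) ≤ t ^ q := Real.rpow_nonneg (by linarith) _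
  calc t ^ q * |a n * G (((n:ℝ)+1)*t)| = |a n| * (t ^ q * |G (((n:ℝ)+1)*t)|) := by
        rw [abs_mul]; ring
    _ ≤ (K * ((n:ℝ)+1) ^ c) * (normApq p q G * ((n:ℝ)+1) ^ (-(min p q))) := by
        apply mul_le_mul (ha n) h1 (by positivity)
        positivity
    _ = (K * normApq p q G) * (((n:ℝ)+1) ^ c * ((n:ℝ)+1) ^ (-(min p q))) := by ring
    _ = (K * normApq p q G) * ((n:ℝ)+1) ^ (c - min p q) := by
        rw [← Real.rpow_add (nat_pos n)]; ring_nf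

lemma summable_abs_SOp (hG : MemApq p q G) (hK : 0 ≤ K)
    (ha : ∀ n, |a n| ≤ K * ((n:ℝ)+1) ^ c) (hc : c - min p q < -1) {t : ℝ} (ht : 0 < t) :
    Summable (fun n : ℕ => |a n * G (((n:ℝ)+1) * t)|) := by
  have hb := (summable_pow_aux hc).mul_left (K * normApq p q G * max (t ^ (-p)) (t ^ (-q)))
  exact Summable.of_nonneg_of_le (fun n => abs_nonneg _)
    (fun n => term_bound_gen hG hK ha ht n) hb

lemma summable_SOp (hG : MemApq p q G) (hK : 0 ≤ K)
    (ha : ∀ n, |a n| ≤ K * ((n:ℝ)+1) ^ c) (hc : c - min p q < -1) {t : ℝ} (ht : 0 < t) :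
    Summable (fun n : ℕ => a n * G (((n:ℝ)+1) * t)) :=
  summable_abs_iff.mp (summable_abs_SOp hG hK ha hc ht)

lemma SOp_bound_lo (hG : MemApq p q G) (hK : 0 ≤ K)
    (ha : ∀ n, |a n| ≤ K * ((n:ℝ)+1) ^ c) (hc : c - min p q < -1)
    {t : ℝ} (ht : t ∈ Ioc (0:ℝ) 1) :
    t ^ p * |SOp a G t| ≤ (K * normApq p q G) * Zc (c - min p q) := by
  have habs := summable_abs_SOp hG hK ha hc ht.1
  have hZs := summable_pow_aux hc
  have htp : (0:ℝ) ≤ t ^ p := Real.rpow_nonneg ht.1.le _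
  calc t ^ p * |SOp a G t| ≤ t ^ p * ∑' n : ℕ, |a n * G (((n:ℝ)+1) * t)| := by
        apply mul_le_mul_of_nonneg_left _ htp
        simpa only [Real.norm_eq_abs, SOp] using norm_tsum_le_tsum_norm
          (f := fun n : ℕ => a n * G (((n:ℝ)+1) * t))
          (by simpa only [Real.norm_eq_abs] using habs)
    _ = ∑' n : ℕ, t ^ p * |a n * G (((n:ℝ)+1) * t)| := tsum_mul_left.symm
    _ ≤ ∑' n : ℕ, (K * normApq p q G) * ((n:ℝ)+1) ^ (c - min p q) := by
        apply Summable.tsum_le_tsum (fun n => term_bound_lo hG hK ha ht n)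
          (habs.mul_left (t ^ p)) (hZs.mul_left _)
    _ = (K * normApq p q G) * Zc (c - min p q) := tsum_mul_left

lemma SOp_bound_hi (hG : MemApq p q G) (hK : 0 ≤ K)
    (ha : ∀ n, |a n| ≤ K * ((n:ℝ)+1) ^ c) (hc : c - min p q < -1)
    {t : ℝ} (ht : 1 ≤ t) :
    t ^ q * |SOp a G t| ≤ (K * normApq p q G) * Zc (c - min p q) := by
  have ht0 : (0:ℝ) < t := lt_of_lt_of_le one_pos ht
  have habs := summable_abs_SOp hG hK ha hc ht0
  have hZs := summable_pow_aux hc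
  have htq : (0:ℝ) ≤ t ^ q := Real.rpow_nonneg ht0.le _
  calc t ^ q * |SOp a G t| ≤ t ^ q * ∑' n : ℕ, |a n * G (((n:ℝ)+1) * t)| := by
        apply mul_le_mul_of_nonneg_left _ htq
        simpa only [Real.norm_eq_abs, SOp] using norm_tsum_le_tsum_norm
          (f := fun n : ℕ => a n * G (((n:ℝ)+1) * t))
          (by simpa only [Real.norm_eq_abs] using habs)
    _ = ∑' n : ℕ, t ^ q * |a n * G (((n:ℝ)+1) * t)| := tsum_mul_left.symm
    _ ≤ ∑' n : ℕ, (K * normApq p q G) * ((n:ℝ)+1) ^ (c - min p q) := by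
        apply Summable.tsum_le_tsum (fun n => term_bound_hi hG hK ha ht n)
          (habs.mul_left (t ^ q)) (hZs.mul_left _)
    _ = (K * normApq p q G) * Zc (c - min p q) := tsum_mul_left

lemma max_rpow_anti {y α p q : ℝ} (hα : 0 < α) (hy : α ≤ y) (hp : 0 ≤ p) (hq : 0 ≤ q) :
    max (y ^ (-p)) (y ^ (-q)) ≤ max (α ^ (-p)) (α ^ (-q)) :=
  max_le_max (rpow_neg_anti hα hy hp) (rpow_neg_anti hα hy hq)

lemma continuousOn_SOp (hG : MemApq p q G) (hK : 0 ≤ K)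
    (ha : ∀ n, |a n| ≤ K * ((n:ℝ)+1) ^ c) (hc : c - min p q < -1)
    (hp0 : 0 < p) (hq0 : 0 < q) :
    ContinuousOn (SOp a G) (Ioi 0) := by
  intro x hx
  have hx0 : (0:ℝ) < x := hx
  have hxh : (0:ℝ) < x/2 := by linarith
  have hsub : ∀ y ∈ Ioo (x/2) (x+1), (0:ℝ) < y := fun y hy => lt_trans hxh hy.1
  have hcont : ContinuousOn (fun t : ℝ => ∑' n : ℕ, a n * G (((n:ℝ)+1) * t))
      (Ioo (x/2) (x+1)) := by
    apply continuousOn_tsum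
      (u := fun n : ℕ => (K * normApq p q G * max ((x/2) ^ (-p)) ((x/2) ^ (-q))) *
        ((n:ℝ)+1) ^ (c - min p q))
    · intro n
      apply ContinuousOn.mul continuousOn_const
      apply hG.1.comp (Continuous.continuousOn (by continuity))
      intro y hy
      exact mem_Ioi.mpr (mul_pos (nat_pos n) (hsub y hy))
    · exact (summable_pow_aux hc).mul_left _
    · intro n y hy
      rw [Real.norm_eq_abs]
      refine le_trans (term_bound_gen hG hK ha (hsub y hy) n) ?_
      have h2 : max (y ^ (-p)) (y ^ (-q)) ≤ max ((x/2) ^ (-p)) ((x/2) ^ (-q)) :=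
        max_rpow_anti hxh (hy.1.le) hp0.le hq0.le
      have h3 : (0:ℝ) ≤ ((n:ℝ)+1) ^ (c - min p q) := Real.rpow_nonneg (nat_pos n).le _
      have h4 : (0:ℝ) ≤ K * normApq p q G := mul_nonneg hK hG.norm_nonneg'
      calc K * normApq p q G * max (y ^ (-p)) (y ^ (-q)) * ((n:ℝ)+1) ^ (c - min p q)
          ≤ K * normApq p q G * max ((x/2) ^ (-p)) ((x/2) ^ (-q)) *
            ((n:ℝ)+1) ^ (c - min p q) := by
            apply mul_le_mul_of_nonneg_right _ h3
            exact mul_le_mul_of_nonneg_left h2 h4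
        _ = _ := rfl
  exact ((hcont.continuousAt (Ioo_mem_nhds (by linarith) (by linarith))).continuousWithinAt :
    ContinuousWithinAt (SOp a G) (Ioi 0) x)

lemma memApq_SOp {h2 : ℝ → ℝ} (hEq : EqOn h2 (SOp a G) (Ioi 0))
    (hG : MemApq p q G) (hK : 0 ≤ K)
    (ha : ∀ n, |a n| ≤ K * ((n:ℝ)+1) ^ c) (hc : c - min p q < -1)
    (hp0 : 0 < p) (hq0 : 0 < q) :
    MemApq p q h2 := by
  refine ⟨(continuousOn_SOp hG hK ha hc hp0 hq0).congr hEq, ⟨(K * normApq p q G) * Zc (c - min p q), ?_⟩,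
    ⟨(K * normApq p q G) * Zc (c - min p q), ?_⟩⟩
  · refine eventually_of_mem (Ioo_mem_nhdsGT_of_mem (⟨le_refl 0, one_pos⟩ : (0:ℝ) ∈ Ico (0:ℝ) 1)) ?_
    intro t ht
    rw [hEq (mem_Ioi.mpr ht.1)]
    exact SOp_bound_lo hG hK ha hc ⟨ht.1, ht.2.le⟩
  · refine eventually_of_mem (Ici_mem_atTop (1:ℝ)) ?_
    intro t ht
    rw [hEq (mem_Ioi.mpr (lt_of_lt_of_le one_pos ht))]
    exact SOp_bound_hi hG hK ha hc ht

lemma norm_SOp_le {h2 : ℝ → ℝ} (hEq : EqOn h2 (SOp a G) (Ioi 0))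
    (hG : MemApq p q G) (hK : 0 ≤ K)
    (ha : ∀ n, |a n| ≤ K * ((n:ℝ)+1) ^ c) (hc : c - min p q < -1) :
    normApq p q h2 ≤ (K * Zc (c - min p q)) * normApq p q G := by
  apply max_le
  · refine csSup_le ⟨_, mem_image_of_mem _ (show (1/2:ℝ) ∈ Ioo (0:ℝ) 1 by norm_num)⟩ ?_
    rintro _ ⟨t, ht, rfl⟩
    show t ^ p * |h2 t| ≤ _
    rw [hEq (mem_Ioi.mpr ht.1)]
    calc t ^ p * |SOp a G t| ≤ (K * normApq p q G) * Zc (c - min p q) :=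
          SOp_bound_lo hG hK ha hc ⟨ht.1, ht.2.le⟩
      _ = (K * Zc (c - min p q)) * normApq p q G := by ring
  · refine csSup_le ⟨_, mem_image_of_mem _ (mem_Ici.mpr (le_refl (1:ℝ)))⟩ ?_
    rintro _ ⟨t, ht, rfl⟩
    show t ^ q * |h2 t| ≤ _
    rw [hEq (mem_Ioi.mpr (lt_of_lt_of_le one_pos ht))]
    calc t ^ q * |SOp a G t| ≤ (K * normApq p q G) * Zc (c - min p q) :=
          SOp_bound_hi hG hK ha hc ht
      _ = (K * Zc (c - min p q)) * normApq p q G := by ring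

end TermBounds

lemma hasDerivAt_SOp {p q p' q' : ℝ} {G G' : ℝ → ℝ}
    (hG : MemApq p q G) (hG' : MemApq p' q' G')
    (hder : ∀ y ∈ Ioi (0:ℝ), HasDerivAt G (G' y) y)
    {a : ℕ → ℝ} {K c : ℝ} (hK : 0 ≤ K) (ha : ∀ n, |a n| ≤ K * ((n:ℝ)+1) ^ c)
    (hc : c - min p q < -1) (hc' : (c+1) - min p' q' < -1)
    (hp' : 0 < p') (hq' : 0 < q') {x : ℝ} (hx : 0 < x) :
    HasDerivAt (SOp a G) (SOp (fun n => a n * ((n:ℝ)+1)) G' x) x := by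
  have ha' : ∀ n, |a n * ((n:ℝ)+1)| ≤ K * ((n:ℝ)+1) ^ (c+1) := by
    intro n
    rw [abs_mul, abs_of_pos (nat_pos n), Real.rpow_add (nat_pos n), Real.rpow_one]
    calc |a n| * ((n:ℝ)+1) ≤ (K * ((n:ℝ)+1) ^ c) * ((n:ℝ)+1) :=
          mul_le_mul_of_nonneg_right (ha n) (nat_pos n).le
      _ = K * (((n:ℝ)+1) ^ c * ((n:ℝ)+1)) := by ring
  have hxh : (0:ℝ) < x/2 := by linarith
  have hsub : ∀ y ∈ Ioo (x/2) (x+1), (0:ℝ) < y := fun y hy => lt_trans hxh hy.1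
  set g : ℕ → ℝ → ℝ := fun n z => a n * G (((n:ℝ)+1) * z) with hg_def
  set g' : ℕ → ℝ → ℝ := fun n y => (a n * ((n:ℝ)+1)) * G' (((n:ℝ)+1) * y) with hg'_def
  have hgder : ∀ (n : ℕ), ∀ y ∈ Ioo (x/2) (x+1), HasDerivAt (g n) (g' n y) y := by
    intro n y hy
    have hy0 : (0:ℝ) < y := hsub y hy
    have h1 : HasDerivAt (fun z : ℝ => ((n:ℝ)+1)*z) ((n:ℝ)+1) y := by
      simpa using (hasDerivAt_id y).const_mul ((n:ℝ)+1)
    have h2 : HasDerivAt (fun z : ℝ => G (((n:ℝ)+1) * z)) (G' (((n:ℝ)+1)*y) * ((n:ℝ)+1)) y :=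
      HasDerivAt.comp y (hder (((n:ℝ)+1)*y) (mem_Ioi.mpr (mul_pos (nat_pos n) hy0))) h1
    have h3 := h2.const_mul (a n)
    convert h3 using 1
    show (a n * ((n:ℝ)+1)) * G' (((n:ℝ)+1)*y) = a n * (G' (((n:ℝ)+1)*y) * ((n:ℝ)+1))
    ring
    all_goals rfl
  have hgbd : ∀ (n : ℕ), ∀ y ∈ Ioo (x/2) (x+1), ‖g' n y‖ ≤
      (K * normApq p' q' G' * max ((x/2) ^ (-p')) ((x/2) ^ (-q'))) *
        ((n:ℝ)+1) ^ ((c+1) - min p' q') := by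
    intro n y hy
    have hy0 : (0:ℝ) < y := hsub y hy
    rw [Real.norm_eq_abs]
    refine le_trans (term_bound_gen hG' hK ha' hy0 n) ?_
    have h2 : max (y ^ (-p')) (y ^ (-q')) ≤ max ((x/2) ^ (-p')) ((x/2) ^ (-q')) :=
      max_rpow_anti hxh hy.1.le hp'.le hq'.le
    apply mul_le_mul_of_nonneg_right _ (Real.rpow_nonneg (nat_pos n).le _)
    exact mul_le_mul_of_nonneg_left h2 (mul_nonneg hK hG'.norm_nonneg')
  have hxmem : x ∈ Ioo (x/2) (x+1) := by constructor <;> linarith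
  have hg0 : Summable fun n => g n x := summable_SOp hG hK ha hc hx
  exact hasDerivAt_tsum_of_isPreconnected ((summable_pow_aux hc').mul_left _)
    isOpen_Ioo isPreconnected_Ioo hgder hgbd hxmem hg0 hxmem


lemma main_ladder (k : ℕ) (p q : Fin (k + 1) → ℝ)
    (hp : ∀ i : Fin (k + 1), ((i : ℕ) : ℝ) + 1 < p i)
    (hq : ∀ i : Fin (k + 1), ((i : ℕ) : ℝ) + 1 < q i)
    {f : ℝ → ℝ} (hf : MemApqK k p q f) {a : ℕ → ℝ} {K : ℝ}
    (hK : 0 ≤ K) (ha : ∀ n, |a n| ≤ K) :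
    MemApqK k p q (SOp a f) ∧
    normApqK k p q (SOp a f) ≤
      (K * ∑ i : Fin (k+1), Zc (((i : ℕ) : ℝ) - min (p i) (q i))) * normApqK k p q f := by
  have hUD : UniqueDiffOn ℝ (Ioi (0:ℝ)) := uniqueDiffOn_Ioi 0
  set F : ℕ → ℝ → ℝ := fun i => iteratedDerivWithin i f (Ioi 0) with hF
  have hFmem : ∀ i (hi : i ≤ k), MemApq (p ⟨i, by omega⟩) (q ⟨i, by omega⟩) (F i) :=
    fun i hi => hf.2 ⟨i, by omega⟩
  have hppos : ∀ i (hi : i ≤ k), ((i:ℝ)) + 1 < p ⟨i, by omega⟩ := fun i hi => hp ⟨i, by omega⟩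
  have hqpos : ∀ i (hi : i ≤ k), ((i:ℝ)) + 1 < q ⟨i, by omega⟩ := fun i hi => hq ⟨i, by omega⟩
  have hm : ∀ i (hi : i ≤ k), ((i:ℝ)) - min (p ⟨i, by omega⟩) (q ⟨i, by omega⟩) < -1 := by
    intro i hi
    have h1 := hppos i hi
    have h2 := hqpos i hi
    have := lt_min h1 h2
    linarith
  have hp0 : ∀ i (hi : i ≤ k), 0 < p ⟨i, by omega⟩ := by
    intro i hi; have := hppos i hi; have : (0:ℝ) ≤ (i:ℝ) := Nat.cast_nonneg i; linarith [hppos i hi]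
  have hq0 : ∀ i (hi : i ≤ k), 0 < q ⟨i, by omega⟩ := by
    intro i hi; have : (0:ℝ) ≤ (i:ℝ) := Nat.cast_nonneg i; linarith [hqpos i hi]
  have hder : ∀ i, i < k → ∀ y ∈ Ioi (0:ℝ), HasDerivAt (F i) (F (i+1) y) y := by
    intro i hik y hy
    have hdiff : DifferentiableOn ℝ (F i) (Ioi 0) :=
      hf.1.differentiableOn_iteratedDerivWithin (by exact_mod_cast hik) hUD
    have hd : DifferentiableAt ℝ (F i) y := (hdiff y hy).differentiableAt (isOpen_Ioi.mem_nhds hy)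
    have hval : F (i+1) y = deriv (F i) y := by
      rw [hF]
      simp only
      rw [iteratedDerivWithin_succ]
      exact derivWithin_of_isOpen isOpen_Ioi hy
    rw [hval]
    exact hd.hasDerivAt
  set A : ℕ → ℕ → ℝ := fun i n => a n * ((n:ℝ)+1) ^ (i:ℕ) with hA_def
  have hA : ∀ i n, |A i n| ≤ K * ((n:ℝ)+1) ^ ((i:ℕ):ℝ) := by
    intro i n
    rw [hA_def]
    simp only
    rw [abs_mul, abs_of_pos (pow_pos (nat_pos n) i), ← Real.rpow_natCast ((n:ℝ)+1) i]
    exact mul_le_mul_of_nonneg_right (ha n) (Real.rpow_nonneg (nat_pos n).le _)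
  have key : ∀ i, i ≤ k →
      EqOn (iteratedDerivWithin i (SOp a f) (Ioi 0)) (SOp (A i) (F i)) (Ioi 0) := by
    intro i
    induction i with
    | zero =>
      intro _ x hx
      rw [iteratedDerivWithin_zero]
      show SOp a f x = SOp (A 0) (iteratedDerivWithin 0 f (Ioi 0)) x
      rw [iteratedDerivWithin_zero]
      simp [SOp, hA_def]
    | succ i IH =>
      intro hik x hx
      have hik' : i ≤ k := by omega
      have hikk : i < k := by omega
      have hEq := IH hik'
      have hstep : HasDerivAt (SOp (A i) (F i)) (SOp (fun n => A i n * ((n:ℝ)+1)) (F (i+1)) x) x := by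
        refine hasDerivAt_SOp (hFmem i hik') (hFmem (i+1) hik) (hder i hikk) hK (hA i)
          (hm i hik') ?_ (hp0 (i+1) hik) (hq0 (i+1) hik) hx
        have := hm (i+1) hik
        push_cast at this ⊢
        linarith
      have hcoef : (fun n => A i n * ((n:ℝ)+1)) = A (i+1) := by
        funext n
        rw [hA_def]
        simp only
        ring
      calc iteratedDerivWithin (i+1) (SOp a f) (Ioi 0) x
          = derivWithin (iteratedDerivWithin i (SOp a f) (Ioi 0)) (Ioi 0) x := by
            rw [iteratedDerivWithin_succ]
        _ = deriv (iteratedDerivWithin i (SOp a f) (Ioi 0)) x :=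
            derivWithin_of_isOpen isOpen_Ioi hx
        _ = deriv (SOp (A i) (F i)) x :=
            Filter.EventuallyEq.deriv_eq (eventually_of_mem (isOpen_Ioi.mem_nhds hx) hEq)
        _ = SOp (A (i+1)) (F (i+1)) x := by rw [hstep.deriv, hcoef]
  have hcont : ∀ i (hi : i ≤ k), ContinuousOn (SOp (A i) (F i)) (Ioi 0) :=
    fun i hi => continuousOn_SOp (hFmem i hi) hK (hA i) (hm i hi) (hp0 i hi) (hq0 i hi)
  have hmemK : MemApqK k p q (SOp a f) := by
    constructor
    · apply contDiffOn_of_continuousOn_differentiableOn_deriv (n := (k : ℕ∞))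
      · intro m hmk
        have hmk' : m ≤ k := by exact_mod_cast hmk
        exact (hcont m hmk').congr (key m hmk')
      · intro m hmk
        have hmk' : m < k := by exact_mod_cast hmk
        refine DifferentiableOn.congr (fun x hx => ?_) (key m (le_of_lt hmk'))
        exact (hasDerivAt_SOp (hFmem m (le_of_lt hmk')) (hFmem (m+1) hmk') (hder m hmk') hK
          (hA m) (hm m (le_of_lt hmk'))
          (by have := hm (m+1) hmk'; push_cast at this ⊢; linarith)
          (hp0 (m+1) hmk') (hq0 (m+1) hmk') hx).differentiableAt.differentiableWithinAt
    · intro i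
      obtain ⟨i, hi⟩ := i
      have hi' : i ≤ k := by omega
      exact memApq_SOp (key i hi') (hFmem i hi') hK (hA i) (hm i hi') (hp0 i hi') (hq0 i hi')
  refine ⟨hmemK, ?_⟩
  have hnormK : ∀ i (hi : i ≤ k), 0 ≤ normApq (p ⟨i, by omega⟩) (q ⟨i, by omega⟩) (F i) :=
    fun i hi => (hFmem i hi).norm_nonneg'
  calc normApqK k p q (SOp a f)
      = ∑ i : Fin (k+1), normApq (p i) (q i) (iteratedDerivWithin i (SOp a f) (Ioi 0)) := rfl
    _ ≤ ∑ i : Fin (k+1), (K * Zc (((i:ℕ):ℝ) - min (p i) (q i))) * normApqK k p q f := by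
        apply Finset.sum_le_sum
        intro i _
        obtain ⟨i, hi⟩ := i
        have hi' : i ≤ k := by omega
        calc normApq (p ⟨i, hi⟩) (q ⟨i, hi⟩) (iteratedDerivWithin i (SOp a f) (Ioi 0))
            ≤ (K * Zc (((i:ℕ):ℝ) - min (p ⟨i, hi⟩) (q ⟨i, hi⟩))) *
              normApq (p ⟨i, hi⟩) (q ⟨i, hi⟩) (F i) :=
              norm_SOp_le (key i hi') (hFmem i hi') hK (hA i) (hm i hi')
          _ ≤ (K * Zc (((i:ℕ):ℝ) - min (p ⟨i, hi⟩) (q ⟨i, hi⟩))) * normApqK k p q f := by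
              apply mul_le_mul_of_nonneg_left _ (mul_nonneg hK (Zc_nonneg _))
              exact Finset.single_le_sum
                (f := fun j : Fin (k+1) => normApq (p j) (q j) (iteratedDerivWithin j f (Ioi 0)))
                (fun j _ => by obtain ⟨j, hj⟩ := j; exact hnormK j (by omega)) (Finset.mem_univ (⟨i, hi⟩ : Fin (k+1)))
    _ = (K * ∑ i : Fin (k+1), Zc (((i:ℕ):ℝ) - min (p i) (q i))) * normApqK k p q f := by
        rw [← Finset.sum_mul, ← Finset.mul_sum]


lemma Tk_zero_eq (f : ℝ → ℝ) : Tk 0 f = SOp (fun n : ℕ => ((n:ℝ)+1) ^ (0:ℕ)) f := rfl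

lemma Tk_zero_apply (f : ℝ → ℝ) (t : ℝ) : Tk 0 f t = ∑' n : ℕ, f (((n:ℝ)+1) * t) := by
  simp [Tk]

lemma one_coef_bound : ∀ n : ℕ, |((n:ℝ)+1) ^ (0:ℕ)| ≤ (1:ℝ) * ((n:ℝ)+1) ^ ((0:ℕ):ℝ) := by
  intro n; simp

lemma zetaR_strict {s r : ℝ} (hs : 1 < s) (hsr : s < r) : zetaR r < zetaR s := by
  apply Summable.tsum_lt_tsum_of_nonneg (i := 1)
  · intro n; positivity
  · intro n
    exact Real.rpow_le_rpow_of_exponent_le (nat_one_le n) (by linarith)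
  · have h2 : (1:ℝ) < (1:ℕ) + 1 := by norm_num
    apply Real.rpow_lt_rpow_of_exponent_lt (by norm_num) (by linarith)
  · exact summable_pow_aux (by linarith)

lemma zetaR_tail {r : ℝ} (hr : 1 < r) :
    ∑' n : ℕ, ((n:ℝ)+2) ^ (-r) = zetaR r - 1 := by
  have hsum : Summable (fun n : ℕ => ((n:ℝ)+1) ^ (-r)) := summable_pow_aux (by linarith)
  have h0 := Summable.tsum_eq_zero_add hsum
  have hcast : ∀ n : ℕ, ((n+1:ℕ):ℝ) + 1 = (n:ℝ) + 2 := by intro n; push_cast; ring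
  rw [show ((0:ℕ):ℝ) + 1 = (1:ℝ) by norm_num, Real.one_rpow] at h0
  have : zetaR r = 1 + ∑' n : ℕ, ((n:ℝ)+2) ^ (-r) := by
    rw [zetaR, h0]
    congr 1
    apply tsum_congr
    intro n
    rw [hcast n]
  linarith

lemma summable_shift2 {r : ℝ} (hr : 1 < r) : Summable (fun n : ℕ => ((n:ℝ)+2) ^ (-r)) := by
  have hsum : Summable (fun n : ℕ => ((n:ℝ)+1) ^ (-r)) := summable_pow_aux (by linarith)
  have h2 := (summable_nat_add_iff (f := fun n : ℕ => ((n:ℝ)+1) ^ (-r)) 1).mpr hsum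
  refine h2.congr fun n => ?_
  push_cast; ring_nf

lemma inj_core {p0 q0 s : ℝ} (hs1 : 1 < s) (hzeta : zetaR s = 2) (hpq : q0 ≤ p0) (hsq : s < q0)
    {f g : ℝ → ℝ} (hf : MemApq p0 q0 f) (hg : MemApq p0 q0 g)
    (heq : ∀ t : ℝ, 0 < t → ∑' n : ℕ, f (((n:ℝ)+1)*t) = ∑' n : ℕ, g (((n:ℝ)+1)*t)) :
    EqOn f g (Ioi 0) := by
  have hq1 : 1 < q0 := lt_trans hs1 hsq
  have hmin : min p0 q0 = q0 := min_eq_right hpq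
  have hc : ((0:ℕ):ℝ) - min p0 q0 < -1 := by rw [hmin]; push_cast; linarith
  have hone : ∀ n : ℕ, |(1:ℝ)| ≤ (1:ℝ) * ((n:ℝ)+1) ^ ((0:ℕ):ℝ) := by intro n; simp
  -- summability of the shifted terms
  have hsumf : ∀ u : ℝ, 0 < u → Summable (fun n : ℕ => f (((n:ℝ)+1)*u)) := by
    intro u hu
    have := summable_SOp (a := fun _ : ℕ => (1:ℝ)) (c := ((0:ℕ):ℝ)) hf zero_le_one hone hc hu
    simpa using this
  have hsumg : ∀ u : ℝ, 0 < u → Summable (fun n : ℕ => g (((n:ℝ)+1)*u)) := by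
    intro u hu
    have := summable_SOp (a := fun _ : ℕ => (1:ℝ)) (c := ((0:ℕ):ℝ)) hg zero_le_one hone hc hu
    simpa using this
  -- c0 < 1
  set c0 := zetaR q0 - 1 with hc0
  have hc0lt : c0 < 1 := by
    have := zetaR_strict hs1 hsq
    rw [hzeta] at this
    simp only [hc0]
    linarith
  intro x hx
  have hx0 : (0:ℝ) < x := hx
  set T := min x 1 with hT
  have hT0 : 0 < T := lt_min hx0 one_pos
  have hT1 : T ≤ 1 := min_le_right _ _
  have hTx : T ≤ x := min_le_left _ _
  set W : ℝ → ℝ := fun u => if u < 1 then u ^ p0 else u ^ q0 with hW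
  set h : ℝ → ℝ := fun u => f u - g u with hh
  set A := (fun u => W u * |h u|) '' Ici T with hA
  have hWnn : ∀ u : ℝ, 0 < u → 0 ≤ W u := by
    intro u hu; rw [hW]; dsimp only; split <;> exact Real.rpow_nonneg hu.le _
  have hWpos : ∀ u : ℝ, 0 < u → 0 < W u := by
    intro u hu; rw [hW]; dsimp only; split <;> exact Real.rpow_pos_of_pos hu _
  have hCf := hf.norm_nonneg'
  have hCg := hg.norm_nonneg'
  have hbd : ∀ u : ℝ, u ∈ Ici T → W u * |h u| ≤ normApq p0 q0 f + normApq p0 q0 g := by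
    intro u hu
    have hu0 : 0 < u := lt_of_lt_of_le hT0 hu
    have habs : |h u| ≤ |f u| + |g u| := abs_sub _ _
    rw [hW]; dsimp only
    split
    · rename_i hu1
      calc u ^ p0 * |h u| ≤ u ^ p0 * (|f u| + |g u|) :=
            mul_le_mul_of_nonneg_left habs (Real.rpow_nonneg hu0.le _)
        _ = u ^ p0 * |f u| + u ^ p0 * |g u| := by ring
        _ ≤ normApq p0 q0 f + normApq p0 q0 g :=
            add_le_add (hf.le_norm_lo ⟨hu0, hu1⟩) (hg.le_norm_lo ⟨hu0, hu1⟩)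
    · rename_i hu1
      push_neg at hu1
      calc u ^ q0 * |h u| ≤ u ^ q0 * (|f u| + |g u|) :=
            mul_le_mul_of_nonneg_left habs (Real.rpow_nonneg hu0.le _)
        _ = u ^ q0 * |f u| + u ^ q0 * |g u| := by ring
        _ ≤ normApq p0 q0 f + normApq p0 q0 g :=
            add_le_add (hf.le_norm_hi hu1) (hg.le_norm_hi hu1)
  have hAbdd : BddAbove A := ⟨normApq p0 q0 f + normApq p0 q0 g, by
    rintro _ ⟨u, hu, rfl⟩; exact hbd u hu⟩
  have hAne : A.Nonempty := ⟨_, mem_image_of_mem _ (mem_Ici.mpr (le_refl T))⟩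
  set E := sSup A with hE
  have hE0 : 0 ≤ E := by
    refine le_trans ?_ (le_csSup hAbdd (mem_image_of_mem _ (mem_Ici.mpr (le_refl T))))
    exact mul_nonneg (hWnn T hT0) (abs_nonneg _)
  -- the key recursive estimate
  have hkey : ∀ u : ℝ, u ∈ Ici T → W u * |h u| ≤ c0 * E := by
    intro u hu
    have hu0 : 0 < u := lt_of_lt_of_le hT0 hu
    -- h u = - ∑' n, h ((n+2) u)
    have hsh : Summable (fun n : ℕ => h (((n:ℝ)+1)*u)) := (hsumf u hu0).sub (hsumg u hu0)
    have hzero : ∑' n : ℕ, h (((n:ℝ)+1)*u) = 0 := by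
      rw [hh]
      dsimp only
      rw [Summable.tsum_sub (hsumf u hu0) (hsumg u hu0), heq u hu0, sub_self]
    have hsh2 : Summable (fun n : ℕ => h (((n:ℝ)+2)*u)) := by
      have h2 := (summable_nat_add_iff (f := fun n : ℕ => h (((n:ℝ)+1)*u)) 1).mpr hsh
      refine h2.congr fun n => ?_
      push_cast; ring_nf
    have hrec : h u = - ∑' n : ℕ, h (((n:ℝ)+2)*u) := by
      have h0 := Summable.tsum_eq_zero_add hsh
      rw [hzero] at h0
      have hterm : h (((0:ℕ):ℝ)+1 * u) = h u := by norm_num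
      have : (0:ℝ) = h u + ∑' n : ℕ, h (((n:ℝ)+2)*u) := by
        rw [h0]
        congr 1
        · norm_num
        · apply tsum_congr; intro n; push_cast; ring_nf
      linarith
    -- termwise bound
    have hterm : ∀ n : ℕ, W u * |h (((n:ℝ)+2)*u)| ≤ ((n:ℝ)+2) ^ (-q0) * E := by
      intro n
      have hn2 : (1:ℝ) ≤ (n:ℝ)+2 := by have := Nat.cast_nonneg (α := ℝ) n; linarith
      have hn2' : (0:ℝ) < (n:ℝ)+2 := by linarith
      set v := ((n:ℝ)+2)*u with hv
      have hvu : u ≤ v := by rw [hv]; nlinarith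
      have hv0 : 0 < v := lt_of_lt_of_le hu0 hvu
      have hvT : v ∈ Ici T := le_trans hu hvu
      have hvE : W v * |h v| ≤ E := le_csSup hAbdd (mem_image_of_mem _ hvT)
      have habs0 : 0 ≤ |h v| := abs_nonneg _
      rcases lt_or_ge u 1 with hu1 | hu1
      · rcases lt_or_ge v 1 with hv1 | hv1
        · -- both < 1 : use p0
          have hWu : W u = u ^ p0 := by rw [hW]; simp [hu1]
          have hWv : W v = v ^ p0 := by rw [hW]; simp [hv1]
          have hsplit : u ^ p0 = ((n:ℝ)+2) ^ (-p0) * v ^ p0 := by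
            rw [hv, Real.mul_rpow hn2'.le hu0.le, Real.rpow_neg hn2'.le]
            field_simp
          calc W u * |h v| = ((n:ℝ)+2) ^ (-p0) * (v ^ p0 * |h v|) := by
                rw [hWu, hsplit]; ring
            _ ≤ ((n:ℝ)+2) ^ (-p0) * E := by
                apply mul_le_mul_of_nonneg_left _ (Real.rpow_nonneg hn2'.le _)
                rw [← hWv]; exact hvE
            _ ≤ ((n:ℝ)+2) ^ (-q0) * E := by
                apply mul_le_mul_of_nonneg_right _ hE0
                exact Real.rpow_le_rpow_of_exponent_le hn2 (by linarith)
        · -- u < 1 ≤ v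
          have hWu : W u = u ^ p0 := by rw [hW]; simp [hu1]
          have hWv : W v = v ^ q0 := by rw [hW]; simp [not_lt.mpr hv1]
          have hsplit : u ^ p0 = u ^ (p0 - q0) * u ^ q0 := by
            rw [← Real.rpow_add hu0]; ring_nf
          have huq : u ^ q0 = ((n:ℝ)+2) ^ (-q0) * v ^ q0 := by
            rw [hv, Real.mul_rpow hn2'.le hu0.le, Real.rpow_neg hn2'.le]
            field_simp
          have hfrac : u ^ (p0 - q0) ≤ 1 := Real.rpow_le_one hu0.le hu1.le (by linarith)
          calc W u * |h v| = u ^ (p0 - q0) * (((n:ℝ)+2) ^ (-q0) * (v ^ q0 * |h v|)) := by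
                rw [hWu, hsplit, huq]; ring
            _ ≤ 1 * (((n:ℝ)+2) ^ (-q0) * E) := by
                apply mul_le_mul hfrac _ _ (by norm_num)
                · apply mul_le_mul_of_nonneg_left _ (Real.rpow_nonneg hn2'.le _)
                  rw [← hWv]; exact hvE
                · positivity
            _ = ((n:ℝ)+2) ^ (-q0) * E := by ring
      · -- 1 ≤ u ≤ v
        have hv1 : (1:ℝ) ≤ v := le_trans hu1 hvu
        have hWu : W u = u ^ q0 := by rw [hW]; simp [not_lt.mpr hu1]
        have hWv : W v = v ^ q0 := by rw [hW]; simp [not_lt.mpr hv1]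
        have huq : u ^ q0 = ((n:ℝ)+2) ^ (-q0) * v ^ q0 := by
          rw [hv, Real.mul_rpow hn2'.le hu0.le, Real.rpow_neg hn2'.le]
          field_simp
        calc W u * |h v| = ((n:ℝ)+2) ^ (-q0) * (v ^ q0 * |h v|) := by
              rw [hWu, huq]; ring
          _ ≤ ((n:ℝ)+2) ^ (-q0) * E := by
              apply mul_le_mul_of_nonneg_left _ (Real.rpow_nonneg hn2'.le _)
              rw [← hWv]; exact hvE
    -- sum up
    have habs_sum : Summable (fun n : ℕ => |h (((n:ℝ)+2)*u)|) := by
      apply Summable.of_nonneg_of_le (fun n => abs_nonneg _) (fun n => ?_)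
        ((summable_shift2 hq1).mul_left (E / W u))
      have := hterm n
      have hWu0 : 0 < W u := hWpos u hu0
      rw [div_mul_eq_mul_div, le_div_iff₀ hWu0]
      calc |h (((n:ℝ)+2)*u)| * W u = W u * |h (((n:ℝ)+2)*u)| := by ring
        _ ≤ ((n:ℝ)+2) ^ (-q0) * E := this
        _ = E * ((n:ℝ)+2) ^ (-q0) := by ring
    calc W u * |h u| = W u * |∑' n : ℕ, h (((n:ℝ)+2)*u)| := by rw [hrec, abs_neg]
      _ ≤ W u * ∑' n : ℕ, |h (((n:ℝ)+2)*u)| := by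
          apply mul_le_mul_of_nonneg_left _ (hWnn u hu0)
          simpa only [Real.norm_eq_abs, SOp] using norm_tsum_le_tsum_norm
            (f := fun n : ℕ => h (((n:ℝ)+2)*u))
            (by simpa only [Real.norm_eq_abs] using habs_sum)
      _ = ∑' n : ℕ, W u * |h (((n:ℝ)+2)*u)| := tsum_mul_left.symm
      _ ≤ ∑' n : ℕ, ((n:ℝ)+2) ^ (-q0) * E := by
          apply Summable.tsum_le_tsum hterm (habs_sum.mul_left (W u))
            ((summable_shift2 hq1).mul_right E)
      _ = (∑' n : ℕ, ((n:ℝ)+2) ^ (-q0)) * E := tsum_mul_right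
      _ = c0 * E := by rw [zetaR_tail hq1, hc0]
  have hEc : E ≤ c0 * E := by
    apply csSup_le hAne
    rintro _ ⟨u, hu, rfl⟩
    exact hkey u hu
  have hEzero : E = 0 := by nlinarith
  have hfinal := hkey x (mem_Ici.mpr hTx)
  rw [hEzero, mul_zero] at hfinal
  have hWx := hWpos x hx0
  have : |h x| ≤ 0 := by
    by_contra hcon
    push_neg at hcon
    nlinarith
  have : h x = 0 := abs_eq_zero.mp (le_antisymm this (abs_nonneg _))
  rw [hh] at this
  dsimp only at this
  linarith

open ArithmeticFunction in
noncomputable def mu1 : ℕ → ℝ := fun n => ((moebius (n+1) : ℤ) : ℝ)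

open ArithmeticFunction in
lemma mu1_abs (n : ℕ) : |mu1 n| ≤ 1 := by
  rw [mu1]
  rw [show |((moebius (n+1) : ℤ) : ℝ)| = ((|moebius (n+1)| : ℤ) : ℝ) by push_cast; ring]
  exact_mod_cast abs_moebius_le_one

lemma mu1_bound : ∀ n : ℕ, |mu1 n| ≤ (1:ℝ) * ((n:ℝ)+1) ^ ((0:ℕ):ℝ) := by
  intro n; simpa using mu1_abs n

open ArithmeticFunction in
lemma sum_moebius_antidiag (d : ℕ) :
    (∑ z ∈ Nat.divisorsAntidiagonal d, ((moebius z.1 : ℤ) : ℝ)) = if d = 1 then 1 else 0 := by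
  have hmz := congrArg (fun (F : ArithmeticFunction ℝ) => F d)
    (coe_moebius_mul_coe_zeta (R := ℝ))
  simp only [mul_apply, one_apply] at hmz
  rw [← hmz]
  apply Finset.sum_congr rfl
  intro z hz
  have hmem := Nat.mem_divisorsAntidiagonal.mp hz
  have hz2 : z.2 ≠ 0 := by
    intro h0
    apply hmem.2
    rw [← hmem.1, h0, mul_zero]
  simp [intCoe_apply, natCoe_apply, zeta_apply, hz2]

def fiberEquiv (d : ℕ) :
    {x : ℕ×ℕ // (x.2+1)*(x.1+1) = d} ≃ {y : ℕ×ℕ // y ∈ Nat.divisorsAntidiagonal d} where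
  toFun x := ⟨(x.1.2+1, x.1.1+1), by
    rw [Nat.mem_divisorsAntidiagonal]
    refine ⟨x.2, ?_⟩
    rw [← x.2]
    exact Nat.mul_ne_zero (Nat.succ_ne_zero _) (Nat.succ_ne_zero _)⟩
  invFun y := ⟨(y.1.2-1, y.1.1-1), by
    obtain ⟨hy1, hy2⟩ := Nat.mem_divisorsAntidiagonal.mp y.2
    have ha0 : y.1.1 ≠ 0 := by intro h0; apply hy2; rw [← hy1, h0, zero_mul]
    have hb0 : y.1.2 ≠ 0 := by intro h0; apply hy2; rw [← hy1, h0, mul_zero]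
    show (y.1.1 - 1 + 1) * (y.1.2 - 1 + 1) = d
    have e1 : y.1.1 - 1 + 1 = y.1.1 := by omega
    have e2 : y.1.2 - 1 + 1 = y.1.2 := by omega
    rw [e1, e2]
    exact hy1⟩
  left_inv := by rintro ⟨⟨m, n⟩, hx⟩; simp
  right_inv := by
    rintro ⟨⟨a, b⟩, hy⟩
    obtain ⟨hy1, hy2⟩ := Nat.mem_divisorsAntidiagonal.mp hy
    have ha0 : a ≠ 0 := by intro h0; apply hy2; rw [← hy1, h0, zero_mul]
    have hb0 : b ≠ 0 := by intro h0; apply hy2; rw [← hy1, h0, mul_zero]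
    apply Subtype.ext
    show (a - 1 + 1, b - 1 + 1) = (a, b)
    have e1 : a - 1 + 1 = a := by omega
    have e2 : b - 1 + 1 = b := by omega
    rw [e1, e2]

lemma fiberEquiv_fst (d : ℕ) (x : {x : ℕ×ℕ // (x.2+1)*(x.1+1) = d}) :
    ((fiberEquiv d x : ℕ×ℕ)).1 = (x : ℕ×ℕ).2 + 1 := rfl

open ArithmeticFunction in
lemma mobius_tsum {w : ℕ → ℝ} {C e : ℝ} (hC : 0 ≤ C) (he : e < -1)
    (hw : ∀ d : ℕ, 1 ≤ d → |w d| ≤ C * (d:ℝ) ^ e) :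
    ∑' m : ℕ, ∑' n : ℕ, mu1 n * w ((n+1)*(m+1)) = w 1 := by
  set U : ℕ×ℕ → ℝ := fun x => mu1 x.2 * w ((x.2+1)*(x.1+1)) with hU_def
  have hbound : ∀ x : ℕ×ℕ, |U x| ≤ (C * ((x.1:ℝ)+1) ^ e) * (((x.2:ℝ)+1) ^ e) := by
    intro x
    have hd : 1 ≤ (x.2+1)*(x.1+1) := Nat.one_le_iff_ne_zero.mpr
      (Nat.mul_ne_zero (Nat.succ_ne_zero _) (Nat.succ_ne_zero _))
    have hcast : (((x.2+1)*(x.1+1) : ℕ) : ℝ) = ((x.2:ℝ)+1) * ((x.1:ℝ)+1) := by push_cast; ring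
    have h2 : |w ((x.2+1)*(x.1+1))| ≤ C * (((x.2:ℝ)+1) ^ e * ((x.1:ℝ)+1) ^ e) := by
      refine le_trans (hw _ hd) ?_
      rw [hcast, Real.mul_rpow (nat_pos x.2).le (nat_pos x.1).le]
    calc |U x| = |mu1 x.2| * |w ((x.2+1)*(x.1+1))| := abs_mul _ _
      _ ≤ 1 * (C * (((x.2:ℝ)+1) ^ e * ((x.1:ℝ)+1) ^ e)) := by
          apply mul_le_mul (mu1_abs x.2) h2 (abs_nonneg _) (by norm_num)
      _ = (C * ((x.1:ℝ)+1) ^ e) * (((x.2:ℝ)+1) ^ e) := by ring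
  have hbsum : Summable (fun x : ℕ×ℕ => (C * ((x.1:ℝ)+1) ^ e) * (((x.2:ℝ)+1) ^ e)) := by
    apply Summable.mul_of_nonneg ((summable_pow_aux he).mul_left C) (summable_pow_aux he)
    · intro m; positivity
    · intro n; positivity
  have hUsum : Summable U :=
    summable_abs_iff.mp (Summable.of_nonneg_of_le (fun x => abs_nonneg _) hbound hbsum)
  have h1 : ∑' m : ℕ, ∑' n : ℕ, mu1 n * w ((n+1)*(m+1)) = ∑' x : ℕ×ℕ, U x :=
    (Summable.tsum_prod' hUsum hUsum.prod_factor).symm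
  have h2 : ∑' x : ℕ×ℕ, U x =
      ∑' d : ℕ, ∑' y : {x : ℕ×ℕ // (x.2+1)*(x.1+1) = d}, U ↑y := by
    rw [← (Equiv.sigmaFiberEquiv (fun x : ℕ×ℕ => (x.2+1)*(x.1+1))).tsum_eq U]
    exact Summable.tsum_sigma'
      (fun d => ((Equiv.sigmaFiberEquiv _).summable_iff.mpr hUsum).sigma_factor d)
      ((Equiv.sigmaFiberEquiv _).summable_iff.mpr hUsum)
  have h3 : ∀ d : ℕ, ∑' y : {x : ℕ×ℕ // (x.2+1)*(x.1+1) = d}, U ↑y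
      = (if d = 1 then 1 else 0) * w d := by
    intro d
    have hUV : ∀ x : {x : ℕ×ℕ // (x.2+1)*(x.1+1) = d},
        U ↑x = (fun z : {y : ℕ×ℕ // y ∈ Nat.divisorsAntidiagonal d} =>
          ((moebius (z:ℕ×ℕ).1 : ℤ) : ℝ) * w d) (fiberEquiv d x) := by
      intro x
      show U ↑x = ((moebius ((fiberEquiv d x : ℕ×ℕ)).1 : ℤ) : ℝ) * w d
      rw [fiberEquiv_fst d x]
      show mu1 (x:ℕ×ℕ).2 * w (((x:ℕ×ℕ).2+1)*((x:ℕ×ℕ).1+1))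
        = ((moebius ((x:ℕ×ℕ).2+1) : ℤ) : ℝ) * w d
      rw [x.2]
      rfl
    calc ∑' y : {x : ℕ×ℕ // (x.2+1)*(x.1+1) = d}, U ↑y
        = ∑' y : {x : ℕ×ℕ // (x.2+1)*(x.1+1) = d},
            (fun z : {y : ℕ×ℕ // y ∈ Nat.divisorsAntidiagonal d} =>
              ((moebius (z:ℕ×ℕ).1 : ℤ) : ℝ) * w d) (fiberEquiv d y) := tsum_congr hUV
      _ = ∑' z : {y : ℕ×ℕ // y ∈ Nat.divisorsAntidiagonal d},
            ((moebius (z:ℕ×ℕ).1 : ℤ) : ℝ) * w d := by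
            exact (fiberEquiv d).tsum_eq
              (fun z : {y : ℕ×ℕ // y ∈ Nat.divisorsAntidiagonal d} =>
                ((moebius (z:ℕ×ℕ).1 : ℤ) : ℝ) * w d)
      _ = ∑ z ∈ Nat.divisorsAntidiagonal d, ((moebius z.1 : ℤ) : ℝ) * w d :=
          Finset.tsum_subtype (Nat.divisorsAntidiagonal d)
            (fun z => ((moebius z.1 : ℤ) : ℝ) * w d)
      _ = (∑ z ∈ Nat.divisorsAntidiagonal d, ((moebius z.1 : ℤ) : ℝ)) * w d :=
          (Finset.sum_mul _ _ _).symm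
      _ = (if d = 1 then 1 else 0) * w d := by rw [sum_moebius_antidiag d]
  have h4 : ∑' d : ℕ, (if d = 1 then (1:ℝ) else 0) * w d = w 1 := by
    rw [show (fun d : ℕ => (if d = 1 then (1:ℝ) else 0) * w d)
        = fun d : ℕ => if d = 1 then w 1 else 0 from funext fun d => by
      by_cases hd : d = 1 <;> simp [hd]]
    exact tsum_ite_eq 1 (fun _ => w 1)
  rw [h1, h2, tsum_congr h3]
  exact h4

lemma normApqK_congr {k : ℕ} {p q : Fin (k+1) → ℝ} {f₁ f₂ : ℝ → ℝ}
    (h : EqOn f₁ f₂ (Ioi 0)) : normApqK k p q f₁ = normApqK k p q f₂ := by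
  apply Finset.sum_congr rfl
  intro i _
  have hEq := iteratedDerivWithin_congr (n := (i:ℕ)) h
  unfold normApq
  congr 1
  · apply congrArg
    apply image_congr
    intro t ht
    rw [hEq (mem_Ioi.mpr ht.1)]
  · apply congrArg
    apply image_congr
    intro t ht
    rw [hEq (mem_Ioi.mpr (lt_of_lt_of_le one_pos ht))]

lemma Tk_SOp_mu1 {p0 q0 : ℝ} (hp1 : 1 < p0) (hq1 : 1 < q0) {g : ℝ → ℝ}
    (hg0 : MemApq p0 q0 g) : EqOn (Tk 0 (SOp mu1 g)) g (Ioi 0) := by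
  intro t ht
  have ht0 : (0:ℝ) < t := ht
  set C := normApq p0 q0 g * max (t ^ (-p0)) (t ^ (-q0)) with hC_def
  have hC0 : 0 ≤ C := mul_nonneg hg0.norm_nonneg'
    (le_max_of_le_left (Real.rpow_nonneg ht0.le _))
  have hmin1 : 1 < min p0 q0 := lt_min hp1 hq1
  have he : -(min p0 q0) < -1 := by linarith
  set w : ℕ → ℝ := fun d => g ((d:ℝ)*t) with hw_def
  have hw : ∀ d : ℕ, 1 ≤ d → |w d| ≤ C * (d:ℝ) ^ (-(min p0 q0)) := by
    intro d hd
    have hd1 : (1:ℝ) ≤ (d:ℝ) := by exact_mod_cast hd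
    have := hg0.bound_mul ht0 hd1
    rw [hw_def]
    calc |g ((d:ℝ)*t)| ≤ normApq p0 q0 g * max (t ^ (-p0)) (t ^ (-q0)) *
          (d:ℝ) ^ (-(min p0 q0)) := this
      _ = C * (d:ℝ) ^ (-(min p0 q0)) := by rw [hC_def]
  have hmain := mobius_tsum hC0 he hw
  have hinner : ∀ m : ℕ, SOp mu1 g (((m:ℝ)+1)*t) = ∑' n : ℕ, mu1 n * w ((n+1)*(m+1)) := by
    intro m
    apply tsum_congr
    intro n
    congr 1
    rw [hw_def]
    congr 1
    push_cast
    ring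
  calc Tk 0 (SOp mu1 g) t = ∑' m : ℕ, SOp mu1 g (((m:ℝ)+1)*t) := Tk_zero_apply _ t
    _ = ∑' m : ℕ, ∑' n : ℕ, mu1 n * w ((n+1)*(m+1)) := tsum_congr hinner
    _ = w 1 := hmain
    _ = g t := by rw [hw_def]; norm_num

lemma memApq_zero {k : ℕ} {p q : Fin (k+1) → ℝ} {f : ℝ → ℝ} (hf : MemApqK k p q f) :
    MemApq (p 0) (q 0) f := by
  have h := hf.2 0
  simpa [iteratedDerivWithin_zero] using h

lemma summable_plain {p0 q0 : ℝ} {f : ℝ → ℝ} (hf : MemApq p0 q0 f) (hmin : 1 < min p0 q0)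
    {t : ℝ} (ht : 0 < t) : Summable (fun n : ℕ => f (((n:ℝ)+1)*t)) := by
  have hone : ∀ n : ℕ, |(1:ℝ)| ≤ (1:ℝ) * ((n:ℝ)+1) ^ ((0:ℕ):ℝ) := by intro n; simp
  have := summable_SOp (a := fun _ : ℕ => (1:ℝ)) (c := ((0:ℕ):ℝ)) hf zero_le_one hone
    (by push_cast; linarith) ht
  simpa using this

lemma ones_bound : ∀ n : ℕ, |((n:ℝ)+1) ^ (0:ℕ)| ≤ (1:ℝ) := by intro n; simp


theorem stmt8 (k : ℕ) (p q : Fin (k + 1) → ℝ)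
    (hp : ∀ i : Fin (k + 1), ((i : ℕ) : ℝ) + 1 < p i)
    (hq : ∀ i : Fin (k + 1), ((i : ℕ) : ℝ) + 1 < q i) :
    ((∀ f : ℝ → ℝ, MemApqK k p q f → MemApqK k p q (Tk 0 f)) ∧
     (∀ f g : ℝ → ℝ, MemApqK k p q f → MemApqK k p q g → ∀ t : ℝ, 0 < t →
        Tk 0 (f + g) t = Tk 0 f t + Tk 0 g t) ∧
     (∀ (c : ℝ) (f : ℝ → ℝ), MemApqK k p q f → ∀ t : ℝ, 0 < t →
        Tk 0 (c • f) t = c * Tk 0 f t) ∧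
     (∃ M : ℝ, 0 ≤ M ∧ ∀ f : ℝ → ℝ, MemApqK k p q f →
        normApqK k p q (Tk 0 f) ≤ M * normApqK k p q f)) ∧
    (∀ s : ℝ, 1 < s → zetaR s = 2 →
      (∀ i : Fin (k + 1), q i ≤ p i ∧ s + ((i : ℕ) : ℝ) < q i) →
      ((∀ f g : ℝ → ℝ, MemApqK k p q f → MemApqK k p q g →
          Set.EqOn (Tk 0 f) (Tk 0 g) (Set.Ioi 0) → Set.EqOn f g (Set.Ioi 0)) ∧
       (∀ g : ℝ → ℝ, MemApqK k p q g →
          ∃ f : ℝ → ℝ, MemApqK k p q f ∧ Set.EqOn (Tk 0 f) g (Set.Ioi 0)) ∧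
       (∃ M : ℝ, 0 ≤ M ∧ ∀ f : ℝ → ℝ, MemApqK k p q f →
          normApqK k p q f ≤ M * normApqK k p q (Tk 0 f)))) := by
  have hp1 : (1:ℝ) < p 0 := by have := hp 0; simpa using this
  have hq1 : (1:ℝ) < q 0 := by have := hq 0; simpa using this
  have hmin1 : (1:ℝ) < min (p 0) (q 0) := lt_min hp1 hq1
  constructor
  · refine ⟨?_, ?_, ?_, ?_⟩
    · intro f hf
      rw [Tk_zero_eq]
      exact (main_ladder k p q hp hq hf zero_le_one ones_bound).1
    · intro f g hf hg t ht
      rw [Tk_zero_apply, Tk_zero_apply, Tk_zero_apply]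
      have hsf := summable_plain (memApq_zero hf) hmin1 ht
      have hsg := summable_plain (memApq_zero hg) hmin1 ht
      rw [← Summable.tsum_add hsf hsg]
      apply tsum_congr
      intro n
      simp [Pi.add_apply]
    · intro c f hf t ht
      simp only [Tk, pow_zero, one_mul, Pi.smul_apply, smul_eq_mul]
      exact tsum_mul_left
    · refine ⟨∑ i : Fin (k+1), Zc (((i:ℕ):ℝ) - min (p i) (q i)), ?_, ?_⟩
      · exact Finset.sum_nonneg fun i _ => Zc_nonneg _
      · intro f hf
        have h := (main_ladder k p q hp hq hf zero_le_one ones_bound).2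
        rw [one_mul] at h
        rw [Tk_zero_eq]
        exact h
  · intro s hs1 hzeta hiq
    have hsq0 : s < q 0 := by have := (hiq 0).2; simpa using this
    refine ⟨?_, ?_, ?_⟩
    · intro f g hf hg hfg
      refine inj_core hs1 hzeta (hiq 0).1 hsq0 (memApq_zero hf) (memApq_zero hg) ?_
      intro t ht
      have h1 := hfg (mem_Ioi.mpr ht)
      rw [Tk_zero_apply, Tk_zero_apply] at h1
      exact h1
    · intro g hg
      exact ⟨SOp mu1 g, (main_ladder k p q hp hq hg zero_le_one mu1_abs).1,
        Tk_SOp_mu1 hp1 hq1 (memApq_zero hg)⟩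
    · refine ⟨∑ i : Fin (k+1), Zc (((i:ℕ):ℝ) - min (p i) (q i)),
        Finset.sum_nonneg fun i _ => Zc_nonneg _, ?_⟩
      intro f hf
      have hTk : MemApqK k p q (Tk 0 f) := by
        rw [Tk_zero_eq]
        exact (main_ladder k p q hp hq hf zero_le_one ones_bound).1
      have hS := main_ladder k p q hp hq hTk zero_le_one mu1_abs
      have hTeq := Tk_SOp_mu1 hp1 hq1 (memApq_zero hTk)
      have hfeq : EqOn f (SOp mu1 (Tk 0 f)) (Ioi 0) := by
        refine inj_core hs1 hzeta (hiq 0).1 hsq0 (memApq_zero hf) (memApq_zero hS.1) ?_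
        intro t ht
        have h1 := hTeq (mem_Ioi.mpr ht)
        rw [Tk_zero_apply] at h1
        rw [h1, Tk_zero_apply]
      calc normApqK k p q f = normApqK k p q (SOp mu1 (Tk 0 f)) := normApqK_congr hfeq
        _ ≤ (1 * ∑ i : Fin (k+1), Zc (((i:ℕ):ℝ) - min (p i) (q i))) *
            normApqK k p q (Tk 0 f) := hS.2
        _ = (∑ i : Fin (k+1), Zc (((i:ℕ):ℝ) - min (p i) (q i))) *
            normApqK k p q (Tk 0 f) := by rw [one_mul]
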